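/- Let F be a Schwartz function on ℍⁿ × ℝ and L a positive integer. There is a constant C, depending only on L, n and finitely many Schwartz seminorms of F, such that whenever |(z',u')| ≥ (1/(2γ))(1+|(z,u)|) and |r'| ≤ (1/2)(1+|r|), one has |F((z,u)∘(z',u')⁻¹, r−r') − F((z,u), r−r') − F((z,u)∘(z',u')⁻¹, r) + F((z,u), r)| ≤ C [(1+|(z,u)∘(z',u')⁻¹|)^{−(L+2n+2)} + (1+|(z,u)|)^{−(L+2n+2)}] · |r'| (1+|r|)^{−(L+1)}. -/

import Mathlib

open MeasureTheory Complex SchwartzMap Filter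
open scoped BigOperators ComplexConjugate FourierTransform ENNReal

noncomputable section

/-- The underlying space of the Heisenberg group ℍⁿ ≅ ℂⁿ × ℝ. -/
abbrev H (n : ℕ) := (Fin n → ℂ) × ℝ

/-- Heisenberg group multiplication: (z,t)∘(z',t') = (z+z', t+t'+2 Im(z·conj z')). -/
def Hmul {n : ℕ} (x y : H n) : H n :=
  (x.1 + y.1, x.2 + y.2 + 2 * (∑ j, x.1 j * conj (y.1 j)).im)

/-- Heisenberg group inverse: (z,t)⁻¹ = (-z,-t). -/
def Hinv {n : ℕ} (x : H n) : H n := (-x.1, -x.2)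

/-- Homogeneous norm |(z,t)| = (|z|² + |t|)^{1/2}. -/
def Hnorm {n : ℕ} (x : H n) : ℝ := Real.sqrt ((∑ j, Complex.normSq (x.1 j)) + |x.2|)

/-- Convolution on ℍⁿ : (f∗g)(x) = ∫ f(x∘y⁻¹) g(y) dy. -/
def Hconv {n : ℕ} (f g : H n → ℝ) (x : H n) : ℝ := ∫ y, f (Hmul x (Hinv y)) * g y

/-- Partial convolution in the central variable: (f ∗₂ h)(z,u) = ∫ f(z,u−v) h(v) dv. -/
def conv2 {n : ℕ} (f : H n → ℝ) (h : ℝ → ℝ) (x : H n) : ℝ := ∫ v, f (x.1, x.2 - v) * h v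

/-- Ordinary convolution on ℝ. -/
def convR (h k : ℝ → ℝ) (x : ℝ) : ℝ := ∫ v, h (x - v) * k v

/-- Convolution on the direct product group ℍⁿ × ℝ. -/
def PConv {n : ℕ} (F G : H n × ℝ → ℝ) (p : H n × ℝ) : ℝ :=
  ∫ q : H n × ℝ, F (Hmul p.1 (Hinv q.1), p.2 - q.2) * G q

/-- The projection π : (πF)(z,u) = ∫ F((z,u−v),v) dv. -/
def piProj {n : ℕ} (F : H n × ℝ → ℝ) (x : H n) : ℝ := ∫ v, F ((x.1, x.2 - v), v)

/-- Nonisotropic dilation ψ_s(z,u) = s^{−2n−2} ψ(z/s, u/s²). -/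
def dil1 {n : ℕ} (ψ : H n → ℝ) (s : ℝ) (x : H n) : ℝ :=
  (s ^ (2 * n + 2))⁻¹ * ψ ((s : ℂ)⁻¹ • x.1, x.2 / s ^ 2)

/-- Dilation on ℝ: η_t(v) = t⁻¹ η(v/t). -/
def dil2 (η : ℝ → ℝ) (t : ℝ) (v : ℝ) : ℝ := t⁻¹ * η (v / t)

/-- All moments of a function on ℝ vanish. -/
def momentsVanishR (η : ℝ → ℝ) : Prop := ∀ γ : ℕ, ∫ v : ℝ, v ^ γ * η v = 0

/-- All moments of a function on ℍⁿ vanish. -/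
def momentsVanishH {n : ℕ} (ψ : H n → ℝ) : Prop :=
  ∀ (α β : Fin n → ℕ) (γ : ℕ),
    ∫ x : H n, (∏ j, ((x.1 j).re ^ α j * (x.1 j).im ^ β j)) * x.2 ^ γ * ψ x = 0

/-- A function on ℍⁿ is radial in the ℂⁿ-variable. -/
def HRadial {n : ℕ} (ψ : H n → ℝ) : Prop :=
  ∀ (z z' : Fin n → ℂ) (u : ℝ),
    (∑ j, Complex.normSq (z j)) = (∑ j, Complex.normSq (z' j)) → ψ (z, u) = ψ (z', u)

/-- The product moment conditions defining S_∞(ℍⁿ × ℝ). -/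
def SInf {n : ℕ} (F : H n × ℝ → ℝ) : Prop :=
  (∀ (α β : Fin n → ℕ) (γ : ℕ) (v : ℝ),
    ∫ x : H n, (∏ j, ((x.1 j).re ^ α j * (x.1 j).im ^ β j)) * x.2 ^ γ * F (x, v) = 0) ∧
  (∀ (γ : ℕ) (x : H n), ∫ v : ℝ, v ^ γ * F (x, v) = 0)

/-- The flag component function ψ_{s,t} = ψ^{(1)}_s ∗₂ ψ^{(2)}_t. -/
def psist {n : ℕ} (ψa : H n → ℝ) (ψb : ℝ → ℝ) (s t : ℝ) : H n → ℝ :=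
  conv2 (dil1 ψa s) (dil2 ψb t)

/-- The product kernel Ψ_{s,t}((z,u),r) = ψ^{(1)}_s(z,u) ψ^{(2)}_t(r) on ℍⁿ × ℝ. -/
def PsiST {n : ℕ} (ψa : H n → ℝ) (ψb : ℝ → ℝ) (s t : ℝ) : H n × ℝ → ℝ :=
  fun p => dil1 ψa s p.1 * dil2 ψb t p.2


lemma Hnorm_nonneg {n : ℕ} (x : H n) : 0 ≤ Hnorm x := Real.sqrt_nonneg _

lemma one_add_Hnorm_le (n : ℕ) (y : H n) :
    1 + Hnorm y ≤ (2 + Real.sqrt n) * (1 + ‖y‖) := by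
  have hsn : (0:ℝ) ≤ Real.sqrt n := Real.sqrt_nonneg _
  have hyn : (0:ℝ) ≤ ‖y‖ := norm_nonneg _
  have hsum : (∑ j, Complex.normSq (y.1 j)) ≤ n * ‖y‖ ^ 2 := by
    calc (∑ j, Complex.normSq (y.1 j)) ≤ ∑ _j : Fin n, ‖y‖ ^ 2 := by
          apply Finset.sum_le_sum
          intro j _
          have h1 : ‖y.1 j‖ ≤ ‖y‖ := (norm_le_pi_norm y.1 j).trans (norm_fst_le y)
          have h2 : Complex.normSq (y.1 j) = ‖y.1 j‖ ^ 2 := by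
            rw [Complex.normSq_eq_norm_sq]
          rw [h2]
          exact pow_le_pow_left₀ (norm_nonneg _) h1 2
      _ = n * ‖y‖ ^ 2 := by simp [Finset.sum_const, mul_comm]
  have hy2 : |y.2| ≤ ‖y‖ := norm_snd_le y
  have hsq : Real.sqrt (n:ℝ) ^ 2 = n := Real.sq_sqrt (by positivity)
  have hH : Hnorm y ≤ (Real.sqrt n + 1) * (1 + ‖y‖) := by
    rw [Hnorm]
    have key : (∑ j, Complex.normSq (y.1 j)) + |y.2|
        ≤ ((Real.sqrt n + 1) * (1 + ‖y‖)) ^ 2 := by nlinarith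
    calc Real.sqrt ((∑ j, Complex.normSq (y.1 j)) + |y.2|)
        ≤ Real.sqrt (((Real.sqrt n + 1) * (1 + ‖y‖)) ^ 2) := Real.sqrt_le_sqrt key
      _ = (Real.sqrt n + 1) * (1 + ‖y‖) := Real.sqrt_sq (by positivity)
  nlinarith

/-- Key one-variable difference estimate. -/
lemma key_diff (n : ℕ) (F : SchwartzMap (H n × ℝ) ℝ) (A B : ℕ) :
    ∃ C > 0, ∀ (y : H n) (r r' : ℝ), |r'| ≤ 1 / 2 * (1 + |r|) →
      |F (y, r - r') - F (y, r)| ≤ C * (1 / (1 + Hnorm y) ^ A) * (|r'| / (1 + |r|) ^ B) := by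
  set S : ℝ := 2 ^ (A + B) *
    ((Finset.Iic (A + B, 1)).sup (fun m => SchwartzMap.seminorm ℝ m.1 m.2)) F with hSdef
  have hS0 : 0 ≤ S := by
    apply mul_nonneg (by positivity)
    exact apply_nonneg _ _
  have hdecay : ∀ p : H n × ℝ, (1 + ‖p‖) ^ (A + B) * ‖iteratedFDeriv ℝ 1 (⇑F) p‖ ≤ S :=
    fun p => one_add_le_sup_seminorm_apply (𝕜 := ℝ) (m := (A + B, 1)) le_rfl le_rfl F p
  set c : ℝ := (2 + Real.sqrt n) ^ A * 2 ^ B * S with hcdef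
  have hc0 : 0 ≤ c := by
    apply mul_nonneg (by positivity) hS0
  refine ⟨c + 1, by positivity, ?_⟩
  intro y r r' hr'
  have hP : (0:ℝ) < (1 + Hnorm y) ^ A := by
    have := Hnorm_nonneg y; positivity
  have hQ : (0:ℝ) < (1 + |r|) ^ B := by positivity
  set G : ℝ → ℝ := fun θ => F (y, r - θ * r') with hGdef
  set f' : ℝ → ℝ := fun θ => fderiv ℝ (⇑F) (y, r - θ * r') (0, -r') with hf'def
  have hG : ∀ θ ∈ Set.Icc (0:ℝ) 1, HasDerivWithinAt G (f' θ) (Set.Icc 0 1) θ := by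
    intro θ _
    have h1 : HasDerivAt (fun θ : ℝ => r - θ * r') (-r') θ := by
      simpa using ((hasDerivAt_id θ).mul_const r').const_sub r
    have h2 : HasDerivAt (fun θ : ℝ => ((y, r - θ * r') : H n × ℝ)) (0, -r') θ :=
      (hasDerivAt_const θ y).prodMk h1
    have h3 := (F.differentiableAt.hasFDerivAt).comp_hasDerivAt θ h2
    exact h3.hasDerivWithinAt
  set D : ℝ := c * |r'| / ((1 + Hnorm y) ^ A * (1 + |r|) ^ B) with hDdef
  have hbound : ∀ θ ∈ Set.Ico (0:ℝ) 1, ‖f' θ‖ ≤ D := by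
    intro θ hθ
    set s : ℝ := r - θ * r' with hsdef
    set p : H n × ℝ := (y, s) with hpdef
    have hI0 : 0 ≤ ‖iteratedFDeriv ℝ 1 (⇑F) p‖ := norm_nonneg _
    -- pointwise derivative bound
    have hv : ‖((0, -r') : H n × ℝ)‖ = |r'| := by
      simp [Prod.norm_def, Real.norm_eq_abs]
    have hiter : ‖f' θ‖ ≤ ‖iteratedFDeriv ℝ 1 (⇑F) p‖ * |r'| := by
      have h := (iteratedFDeriv ℝ 1 (⇑F) p).le_opNorm ![((0, -r') : H n × ℝ)]
      have heq : (iteratedFDeriv ℝ 1 (⇑F) p) ![((0, -r') : H n × ℝ)]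
          = fderiv ℝ (⇑F) p ((0, -r') : H n × ℝ) := by
        rw [iteratedFDeriv_one_apply]; rfl
      rw [heq] at h
      simpa [hv] using h
    -- geometric facts
    have hsy : |s| ≤ ‖p‖ := norm_snd_le p
    have hyy : ‖y‖ ≤ ‖p‖ := norm_fst_le p
    have h4 : (1 + ‖y‖) ^ A * (1 + |s|) ^ B ≤ (1 + ‖p‖) ^ (A + B) := by
      rw [pow_add]
      have h4a : (1 + ‖y‖) ^ A ≤ (1 + ‖p‖) ^ A := by gcongr <;> linarith
      have h4b : (1 + |s|) ^ B ≤ (1 + ‖p‖) ^ B := by gcongr <;> linarith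
      exact mul_le_mul h4a h4b (by positivity) (by positivity)
    have h2 : (1 + Hnorm y) ^ A ≤ (2 + Real.sqrt n) ^ A * (1 + ‖y‖) ^ A := by
      rw [← mul_pow]
      exact pow_le_pow_left₀ (by linarith [Hnorm_nonneg y]) (one_add_Hnorm_le n y) A
    have hsr : 1 + |r| ≤ 2 * (1 + |s|) := by
      have hθ1 : |θ * r'| ≤ |r'| := by
        rw [abs_mul]
        have : |θ| ≤ 1 := by rw [_root_.abs_of_nonneg hθ.1]; linarith [hθ.2]
        nlinarith [abs_nonneg r']
      have : |r| ≤ |s| + |θ * r'| := by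
        have : r = s + θ * r' := by rw [hsdef]; ring
        rw [this]; exact abs_add_le _ _
      linarith
    have h3 : (1 + |r|) ^ B ≤ 2 ^ B * (1 + |s|) ^ B := by
      rw [← mul_pow]
      exact pow_le_pow_left₀ (by positivity) hsr B
    have hmain : ‖f' θ‖ * ((1 + Hnorm y) ^ A * (1 + |r|) ^ B) ≤ c * |r'| := by
      calc ‖f' θ‖ * ((1 + Hnorm y) ^ A * (1 + |r|) ^ B)
          ≤ (‖iteratedFDeriv ℝ 1 (⇑F) p‖ * |r'|) * ((1 + Hnorm y) ^ A * (1 + |r|) ^ B) := by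
            apply mul_le_mul_of_nonneg_right hiter (by positivity)
        _ ≤ (‖iteratedFDeriv ℝ 1 (⇑F) p‖ * |r'|) *
            (((2 + Real.sqrt n) ^ A * (1 + ‖y‖) ^ A) * (2 ^ B * (1 + |s|) ^ B)) := by
            apply mul_le_mul_of_nonneg_left _ (by positivity)
            exact mul_le_mul h2 h3 (by positivity) (by positivity)
        _ = ((2 + Real.sqrt n) ^ A * 2 ^ B * |r'|) *
            (‖iteratedFDeriv ℝ 1 (⇑F) p‖ * ((1 + ‖y‖) ^ A * (1 + |s|) ^ B)) := by ring
        _ ≤ ((2 + Real.sqrt n) ^ A * 2 ^ B * |r'|) *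
            (‖iteratedFDeriv ℝ 1 (⇑F) p‖ * (1 + ‖p‖) ^ (A + B)) := by
            apply mul_le_mul_of_nonneg_left _ (by positivity)
            exact mul_le_mul_of_nonneg_left h4 hI0
        _ ≤ ((2 + Real.sqrt n) ^ A * 2 ^ B * |r'|) * S := by
            apply mul_le_mul_of_nonneg_left _ (by positivity)
            rw [mul_comm]; exact hdecay p
        _ = c * |r'| := by rw [hcdef]; ring
    rw [hDdef, le_div_iff₀ (by positivity)]
    exact hmain
  have hMVT := norm_image_sub_le_of_norm_deriv_le_segment' hG hbound 1
    ⟨zero_le_one, le_refl 1⟩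
  have hG1 : G 1 = F (y, r - r') := by rw [hGdef]; norm_num
  have hG0 : G 0 = F (y, r) := by rw [hGdef]; norm_num
  rw [hG1, hG0] at hMVT
  have hfin : |F (y, r - r') - F (y, r)| ≤ D := by
    simpa using hMVT
  refine hfin.trans ?_
  rw [hDdef]
  rw [div_le_iff₀ (by positivity)]
  have : (c + 1) * (1 / (1 + Hnorm y) ^ A) * (|r'| / (1 + |r|) ^ B) *
      ((1 + Hnorm y) ^ A * (1 + |r|) ^ B) = (c + 1) * |r'| := by
    field_simp
  rw [this]
  nlinarith [abs_nonneg r']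


/-- double-difference estimate, regime |(z',u')| large, |r'| small. -/
theorem statement6 (n : ℕ) (F : SchwartzMap (H n × ℝ) ℝ) (L : ℕ) (hL : 0 < L)
    (γ : ℝ) (hγ : 1 < γ)
    (hγ' : ∀ x y : H n, Hnorm (Hmul x y) ≤ γ * (Hnorm x + Hnorm y)) :
    ∃ C > 0, ∀ (x x' : H n) (r r' : ℝ),
      Hnorm x' ≥ 1 / (2 * γ) * (1 + Hnorm x) → |r'| ≤ 1 / 2 * (1 + |r|) →
      |F (Hmul x (Hinv x'), r - r') - F (x, r - r') - F (Hmul x (Hinv x'), r) + F (x, r)|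
        ≤ C * (1 / (1 + Hnorm (Hmul x (Hinv x'))) ^ (L + 2 * n + 2)
            + 1 / (1 + Hnorm x) ^ (L + 2 * n + 2)) * (|r'| / (1 + |r|) ^ (L + 1)) := by
  obtain ⟨C, hC, hkey⟩ := key_diff n F (L + 2 * n + 2) (L + 1)
  refine ⟨C, hC, ?_⟩
  intro x x' r r' _ hr'
  have h1 := hkey (Hmul x (Hinv x')) r r' hr'
  have h2 := hkey x r r' hr'
  set a := (F (Hmul x (Hinv x'), r - r') : ℝ)
  set b := (F (x, r - r') : ℝ)
  set cc := (F (Hmul x (Hinv x'), r) : ℝ)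
  set d := (F (x, r) : ℝ)
  have habs : |a - b - cc + d| ≤ |a - cc| + |b - d| := by
    have : a - b - cc + d = (a - cc) - (b - d) := by ring
    rw [this]
    exact abs_sub _ _
  refine habs.trans ?_
  have expand : C * (1 / (1 + Hnorm (Hmul x (Hinv x'))) ^ (L + 2 * n + 2)
      + 1 / (1 + Hnorm x) ^ (L + 2 * n + 2)) * (|r'| / (1 + |r|) ^ (L + 1))
      = C * (1 / (1 + Hnorm (Hmul x (Hinv x'))) ^ (L + 2 * n + 2)) * (|r'| / (1 + |r|) ^ (L + 1))
      + C * (1 / (1 + Hnorm x) ^ (L + 2 * n + 2)) * (|r'| / (1 + |r|) ^ (L + 1)) := by ring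
  rw [expand]
  exact add_le_add h1 h2
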